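/- arXiv:1309.7752 — 2 statements merged into one kernel-verified Lean document; each statement's English description precedes it below -/
import Mathlib

section
/- Let ρ₀ be an irrational number of type η < ∞. Then for every δ > 0, ∑_{ℓ=1}^m 1/(ℓ⟨ℓρ₀⟩) = O(m^{η−1+δ}) as m → ∞. -/
open Filter

/-- `⟨x⟩`, the distance from `x` to the nearest integer:
`⟨x⟩ = min {x − ⌊x⌋, 1 − (x − ⌊x⌋)}`. -/
noncomputable def distNearestInt (x : ℝ) : ℝ := min (x - ⌊x⌋) (1 - (x - ⌊x⌋))

/-- The set of exponents `ζ ≥ 0` with `liminf_{p → ∞} p^ζ ⟨pρ⟩ = 0` (`p` a positive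
integer); the liminf condition is expressed in its `ε`–`frequently` form. -/
def typeSet (ρ : ℝ) : Set ℝ :=
  {ζ : ℝ | 0 ≤ ζ ∧ ∀ ε > 0, ∃ᶠ p : ℕ in atTop, (p : ℝ) ^ ζ * distNearestInt (p * ρ) < ε}

/-- An irrational number `ρ` is of type `η` if `η` is the supremum of `typeSet ρ`. -/
def IsOfType (ρ η : ℝ) : Prop := IsLUB (typeSet ρ) η

section Auxiliary

lemma dni_eq (x : ℝ) : distNearestInt x = min (Int.fract x) (1 - Int.fract x) := by
  rw [distNearestInt, Int.self_sub_floor]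

lemma dni_nonneg (x : ℝ) : 0 ≤ distNearestInt x := by
  rw [dni_eq]
  have h1 := Int.fract_nonneg x
  have h2 := (Int.fract_lt_one x).le
  exact le_min h1 (by linarith)

lemma dni_le_half (x : ℝ) : distNearestInt x ≤ 1 / 2 := by
  rw [dni_eq]
  rcases le_or_gt (Int.fract x) (1/2) with h | h
  · exact (min_le_left _ _).trans h
  · exact (min_le_right _ _).trans (by linarith)

lemma dni_le_abs (x : ℝ) (n : ℤ) : distNearestInt x ≤ |x - n| := by
  have hf1 := Int.floor_le x
  have hf2 := Int.lt_floor_add_one x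
  rcases le_or_gt (n : ℝ) (⌊x⌋ : ℝ) with h | h
  · have : x - (⌊x⌋ : ℝ) ≤ x - n := by linarith
    calc distNearestInt x ≤ x - ⌊x⌋ := min_le_left _ _
      _ ≤ x - n := this
      _ ≤ |x - n| := le_abs_self _
  · have hn : (⌊x⌋ : ℝ) + 1 ≤ n := by exact_mod_cast Int.add_one_le_of_lt (by exact_mod_cast h)
    calc distNearestInt x ≤ 1 - (x - ⌊x⌋) := min_le_right _ _
      _ ≤ (n : ℝ) - x := by linarith
      _ ≤ |x - n| := by rw [abs_sub_comm]; exact le_abs_self _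

lemma dni_pos {ρ : ℝ} (hirr : Irrational ρ) {p : ℕ} (hp : 1 ≤ p) :
    0 < distNearestInt (p * ρ) := by
  rw [dni_eq]
  have h2 := Int.fract_lt_one ((p:ℝ) * ρ)
  have h1 : 0 < Int.fract ((p:ℝ) * ρ) := by
    rcases (Int.fract_nonneg ((p:ℝ)*ρ)).lt_or_eq with h | h
    · exact h
    · exfalso
      have : (p:ℝ) * ρ = (⌊(p:ℝ)*ρ⌋ : ℝ) := by
        have := Int.self_sub_floor ((p:ℝ)*ρ)
        rw [← h] at this; linarith
      have hi : Irrational ((p:ℝ) * ρ) := by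
        refine (hirr.natCast_mul ?_)
        omega
      exact hi.ne_int _ this
  exact lt_min h1 (by linarith)

lemma dni_sub_le {ρ : ℝ} {a b : ℕ} (hab : a ≤ b) :
    distNearestInt ((b - a : ℕ) * ρ) ≤ |Int.fract (b * ρ) - Int.fract (a * ρ)| := by
  have h := dni_le_abs (((b - a : ℕ) : ℝ) * ρ) (⌊(b:ℝ)*ρ⌋ - ⌊(a:ℝ)*ρ⌋)
  have e : ((b - a : ℕ) : ℝ) * ρ - ((⌊(b:ℝ)*ρ⌋ - ⌊(a:ℝ)*ρ⌋ : ℤ) : ℝ)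
      = Int.fract ((b:ℝ) * ρ) - Int.fract ((a:ℝ) * ρ) := by
    rw [Int.fract, Int.fract]
    push_cast [Nat.cast_sub hab]
    ring
  rwa [e] at h

lemma dni_add_le (ρ : ℝ) (a b : ℕ) :
    distNearestInt ((a + b : ℕ) * ρ) ≤ |Int.fract (a * ρ) + Int.fract (b * ρ) - 1| := by
  have h := dni_le_abs (((a + b : ℕ) : ℝ) * ρ) (⌊(a:ℝ)*ρ⌋ + ⌊(b:ℝ)*ρ⌋ + 1)
  have e : ((a + b : ℕ) : ℝ) * ρ - ((⌊(a:ℝ)*ρ⌋ + ⌊(b:ℝ)*ρ⌋ + 1 : ℤ) : ℝ)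
      = Int.fract ((a:ℝ) * ρ) + Int.fract ((b:ℝ) * ρ) - 1 := by
    rw [Int.fract, Int.fract]
    push_cast
    ring
  rwa [e] at h

lemma harmonic_le_log (J : ℕ) :
    ∑ j ∈ Finset.Icc 1 J, (1 / (j:ℝ)) ≤ 1 + Real.log J := by
  induction J with
  | zero => simp
  | succ J ih =>
    rw [Finset.sum_Icc_succ_top (by omega)]
    rcases Nat.eq_zero_or_pos J with rfl | hJ
    · simp
    · have hJR : (0:ℝ) < J := by exact_mod_cast hJ
      have hstep : (1 : ℝ) / (J + 1) ≤ Real.log (J + 1) - Real.log J := by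
        have h1 : Real.log ((J:ℝ) / (J + 1)) ≤ (J:ℝ) / (J + 1) - 1 :=
          Real.log_le_sub_one_of_pos (by positivity)
        have h2 : Real.log ((J:ℝ) / (J + 1)) = Real.log J - Real.log (J + 1) :=
          Real.log_div (by positivity) (by positivity)
        have h3 : (J:ℝ) / (J + 1) - 1 = -(1 / (J + 1)) := by field_simp; ring
        rw [h2, h3] at h1
        linarith
      have : ((J + 1 : ℕ) : ℝ) = (J : ℝ) + 1 := by push_cast; ring
      rw [this]
      linarith

lemma harmonic_le_rpow {t : ℝ} (ht : 0 < t) {J : ℕ} (hJ : 1 ≤ J) :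
    ∑ j ∈ Finset.Icc 1 J, (1 / (j:ℝ)) ≤ (1 + 1/t) * (J:ℝ) ^ t := by
  have hJR : (1:ℝ) ≤ (J:ℝ) := by exact_mod_cast hJ
  have h1 : (1:ℝ) ≤ (J:ℝ) ^ t := Real.one_le_rpow hJR ht.le
  have h2 : Real.log J ≤ (J:ℝ) ^ t / t := by
    have := Real.log_le_sub_one_of_pos (x := (J:ℝ) ^ t) (by positivity)
    have hl : Real.log ((J:ℝ) ^ t) = t * Real.log J := Real.log_rpow (by linarith) t
    rw [hl] at this
    rw [le_div_iff₀ ht]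
    nlinarith [this]
  calc ∑ j ∈ Finset.Icc 1 J, (1 / (j:ℝ)) ≤ 1 + Real.log J := harmonic_le_log J
    _ ≤ (J:ℝ)^t + (J:ℝ)^t / t := by linarith
    _ = (1 + 1/t) * (J:ℝ) ^ t := by field_simp

end Auxiliary
lemma S_bound {ρ ζ c t : ℝ} (hc : 0 < c) (ht : 0 < t) (hζ : 0 < ζ)
    (hlow : ∀ p : ℕ, 1 ≤ p → c * (p:ℝ) ^ (-ζ) ≤ distNearestInt (p * ρ)) :
    ∀ N : ℕ, 1 ≤ N →
      ∑ ℓ ∈ Finset.Icc 1 N, 1 / distNearestInt (ℓ * ρ)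
        ≤ (1 + 1/t) * ((2:ℝ)^ζ / c) ^ (1+t) * (N:ℝ) ^ (ζ * (1+t)) := by
  intro N hN
  have hNR : (1:ℝ) ≤ (N:ℝ) := by exact_mod_cast hN
  set s : ℝ := c * ((2*N:ℕ):ℝ) ^ (-ζ) with hs_def
  have h2N : (0:ℝ) < ((2*N:ℕ):ℝ) := by exact_mod_cast Nat.pos_of_ne_zero (by omega)
  have hs_pos : 0 < s := by
    have := Real.rpow_pos_of_pos h2N (-ζ)
    positivity
  have hs_le : ∀ k : ℕ, 1 ≤ k → k ≤ 2*N → s ≤ distNearestInt (k * ρ) := by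
    intro k hk1 hk2
    refine le_trans ?_ (hlow k hk1)
    rw [hs_def]
    have hkpos : (0:ℝ) < (k:ℝ) := by exact_mod_cast hk1
    have h1 : (k:ℝ) ^ ζ ≤ ((2*N:ℕ):ℝ) ^ ζ :=
      Real.rpow_le_rpow hkpos.le (by exact_mod_cast hk2) hζ.le
    have h2 : ((2*N:ℕ):ℝ) ^ (-ζ) ≤ (k:ℝ) ^ (-ζ) := by
      rw [Real.rpow_neg hkpos.le, Real.rpow_neg h2N.le]
      exact inv_anti₀ (Real.rpow_pos_of_pos hkpos ζ) h1
    exact mul_le_mul_of_nonneg_left h2 hc.le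
  have hs_half : s ≤ 1/2 := (hs_le 1 le_rfl (by omega)).trans (by
    simpa using dni_le_half ((1:ℕ) * ρ))
  set jf : ℕ → ℕ := fun ℓ => ⌊distNearestInt (ℓ * ρ) / s⌋₊ with hjf
  set J : ℕ := ⌊1/(2*s)⌋₊ with hJdef
  have hJ1 : 1 ≤ J := by
    rw [hJdef]
    exact Nat.le_floor (by
      rw [Nat.cast_one, le_one_div (by norm_num) (by linarith)]; linarith)
  have hdge : ∀ ℓ ∈ Finset.Icc 1 N, s ≤ distNearestInt (ℓ * ρ) := by
    intro ℓ hℓ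
    rw [Finset.mem_Icc] at hℓ
    exact hs_le ℓ hℓ.1 (by omega)
  have hjf1 : ∀ ℓ ∈ Finset.Icc 1 N, 1 ≤ jf ℓ := by
    intro ℓ hℓ
    exact Nat.le_floor (by
      rw [Nat.cast_one, le_div_iff₀ hs_pos, one_mul]; exact hdge ℓ hℓ)
  have hjf_le : ∀ ℓ ∈ Finset.Icc 1 N, (jf ℓ : ℝ) * s ≤ distNearestInt (ℓ * ρ) := by
    intro ℓ hℓ
    rw [← le_div_iff₀ hs_pos]
    exact Nat.floor_le (div_nonneg (hs_pos.le.trans (hdge ℓ hℓ)) hs_pos.le)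
  have hjfJ : ∀ ℓ ∈ Finset.Icc 1 N, jf ℓ ≤ J := by
    intro ℓ hℓ
    refine Nat.floor_le_floor ?_
    calc distNearestInt (ℓ * ρ) / s ≤ (1/2) / s := by
          gcongr
          exact dni_le_half _
      _ = 1/(2*s) := by field_simp
  -- injectivity of jf on the window index
  have hinj : ∀ a ∈ Finset.Icc 1 N, ∀ b ∈ Finset.Icc 1 N, jf a = jf b → a = b := by
    have key : ∀ a b, a ∈ Finset.Icc 1 N → b ∈ Finset.Icc 1 N → a < b → jf a ≠ jf b := by
      intro a b ha hb hab heq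
      rw [Finset.mem_Icc] at ha hb
      set da := distNearestInt (a * ρ) with hda_def
      set db := distNearestInt (b * ρ) with hdb_def
      have hda_ge : s ≤ da := hs_le a ha.1 (by omega)
      have hdb_ge : s ≤ db := hs_le b hb.1 (by omega)
      have hfl_a1 : (jf a : ℝ) * s ≤ da := by
        rw [← le_div_iff₀ hs_pos]
        exact Nat.floor_le (div_nonneg (hs_pos.le.trans hda_ge) hs_pos.le)
      have hfl_b1 : (jf b : ℝ) * s ≤ db := by
        rw [← le_div_iff₀ hs_pos]
        exact Nat.floor_le (div_nonneg (hs_pos.le.trans hdb_ge) hs_pos.le)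
      have hfl_a2 : da < ((jf a : ℝ) + 1) * s := by
        rw [← div_lt_iff₀ hs_pos]
        exact_mod_cast Nat.lt_floor_add_one (da / s)
      have hfl_b2 : db < ((jf b : ℝ) + 1) * s := by
        rw [← div_lt_iff₀ hs_pos]
        exact_mod_cast Nat.lt_floor_add_one (db / s)
      have heqR : (jf a : ℝ) = (jf b : ℝ) := by exact_mod_cast heq
      have habs1 : da - db < s := by nlinarith
      have habs2 : db - da < s := by nlinarith
      set fa := Int.fract ((a:ℕ) * ρ) with hfa_def
      set fb := Int.fract ((b:ℕ) * ρ) with hfb_def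
      have hea : da = min fa (1 - fa) := dni_eq _
      have heb : db = min fb (1 - fb) := dni_eq _
      have hsub : s ≤ distNearestInt ((b - a : ℕ) * ρ) :=
        hs_le (b - a) (by omega) (by omega)
      have hadd : s ≤ distNearestInt ((a + b : ℕ) * ρ) :=
        hs_le (a + b) (by omega) (by omega)
      have hsub' := dni_sub_le (ρ := ρ) hab.le
      have hadd' := dni_add_le ρ a b
      rw [← hfa_def, ← hfb_def] at hsub' hadd'
      have habs : ∀ x : ℝ, x = da - db ∨ x = db - da → |x| < s := by
        rintro x (rfl | rfl)
        · exact abs_lt.mpr ⟨by linarith, by linarith⟩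
        · exact abs_lt.mpr ⟨by linarith, by linarith⟩
      rcases min_cases fa (1 - fa) with ⟨ha1, _⟩ | ⟨ha1, _⟩ <;>
        rcases min_cases fb (1 - fb) with ⟨hb1, _⟩ | ⟨hb1, _⟩
      · have : |fb - fa| < s := habs _ (Or.inr (by rw [hea, heb, ha1, hb1]))
        linarith [hsub.trans hsub']
      · have : |fa + fb - 1| < s := habs _ (Or.inl (by rw [hea, heb, ha1, hb1]; ring))
        linarith [hadd.trans hadd']
      · have : |fa + fb - 1| < s := habs _ (Or.inr (by rw [hea, heb, ha1, hb1]; ring))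
        linarith [hadd.trans hadd']
      · have : |fb - fa| < s := habs _ (Or.inl (by rw [hea, heb, ha1, hb1]; ring))
        linarith [hsub.trans hsub']
    intro a ha b hb heq
    rcases lt_trichotomy a b with h | h | h
    · exact absurd heq (key a b ha hb h)
    · exact h
    · exact absurd heq.symm (key b a hb ha h)
  -- the sum estimate
  have hJle : (J:ℝ) ≤ 1/(2*s) := Nat.floor_le (by positivity)
  have step1 : ∑ ℓ ∈ Finset.Icc 1 N, 1 / distNearestInt (ℓ * ρ)
      ≤ ∑ ℓ ∈ Finset.Icc 1 N, (1/s) * (1 / (jf ℓ : ℝ)) := by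
    refine Finset.sum_le_sum ?_
    intro ℓ hℓ
    have hj1 : (1:ℝ) ≤ (jf ℓ : ℝ) := by exact_mod_cast hjf1 ℓ hℓ
    have hjs : 0 < (jf ℓ : ℝ) * s := by nlinarith
    have := one_div_le_one_div_of_le hjs (hjf_le ℓ hℓ)
    calc 1 / distNearestInt (ℓ * ρ) ≤ 1 / ((jf ℓ : ℝ) * s) := this
      _ = (1/s) * (1 / (jf ℓ : ℝ)) := by
          field_simp
  have step2 : ∑ ℓ ∈ Finset.Icc 1 N, (1 / (jf ℓ : ℝ))
      ≤ (1 + 1/t) * (J:ℝ) ^ t := by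
    have himg : ∑ j ∈ (Finset.Icc 1 N).image jf, (1 / (j:ℝ))
        = ∑ ℓ ∈ Finset.Icc 1 N, (1 / (jf ℓ : ℝ)) := Finset.sum_image hinj
    rw [← himg]
    refine le_trans (Finset.sum_le_sum_of_subset_of_nonneg ?_ ?_) (harmonic_le_rpow ht hJ1)
    · intro j hj
      rw [Finset.mem_image] at hj
      obtain ⟨ℓ, hℓ, rfl⟩ := hj
      rw [Finset.mem_Icc]
      exact ⟨hjf1 ℓ hℓ, hjfJ ℓ hℓ⟩
    · intro j _ _
      positivity
  have hJt : (J:ℝ) ^ t ≤ (1/s) ^ t := by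
    refine Real.rpow_le_rpow (by positivity) ?_ ht.le
    calc (J:ℝ) ≤ 1/(2*s) := hJle
      _ ≤ 1/s := by
        rw [div_le_div_iff₀ (by linarith) hs_pos]
        nlinarith
  have h1s : 1/s = ((2*N:ℕ):ℝ) ^ ζ / c := by
    rw [hs_def, Real.rpow_neg h2N.le]
    have : ((2*N:ℕ):ℝ) ^ ζ ≠ 0 := ne_of_gt (Real.rpow_pos_of_pos h2N ζ)
    field_simp
  have hfinal : (1/s) * ((1 + 1/t) * (1/s) ^ t)
      = (1 + 1/t) * ((2:ℝ)^ζ / c) ^ (1+t) * (N:ℝ) ^ (ζ * (1+t)) := by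
    have hsval : (1/s) * (1/s) ^ t = (1/s) ^ (1 + t) := by
      rw [Real.rpow_add (by positivity), Real.rpow_one]
    have hcast : ((2*N:ℕ):ℝ) = 2 * (N:ℝ) := by push_cast; ring
    have hm : ((2*N:ℕ):ℝ) ^ ζ = (2:ℝ)^ζ * (N:ℝ)^ζ := by
      rw [hcast, Real.mul_rpow (by norm_num) (by linarith)]
    have hNζ : (0:ℝ) ≤ (N:ℝ)^ζ := (Real.rpow_pos_of_pos (by linarith) ζ).le
    have h2ζ : (0:ℝ) ≤ (2:ℝ)^ζ / c := by positivity
    calc (1/s) * ((1 + 1/t) * (1/s) ^ t)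
        = (1 + 1/t) * ((1/s) * (1/s)^t) := by ring
      _ = (1 + 1/t) * (1/s) ^ (1+t) := by rw [hsval]
      _ = (1 + 1/t) * ((2:ℝ)^ζ / c * (N:ℝ)^ζ) ^ (1+t) := by
          rw [h1s, hm]; ring_nf
      _ = (1 + 1/t) * ((2:ℝ)^ζ / c) ^ (1+t) * ((N:ℝ)^ζ) ^ (1+t) := by
          rw [Real.mul_rpow h2ζ hNζ]; ring
      _ = (1 + 1/t) * ((2:ℝ)^ζ / c) ^ (1+t) * (N:ℝ) ^ (ζ * (1+t)) := by
          rw [← Real.rpow_mul (by linarith)]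
  calc ∑ ℓ ∈ Finset.Icc 1 N, 1 / distNearestInt (ℓ * ρ)
      ≤ ∑ ℓ ∈ Finset.Icc 1 N, (1/s) * (1 / (jf ℓ : ℝ)) := step1
    _ = (1/s) * ∑ ℓ ∈ Finset.Icc 1 N, (1 / (jf ℓ : ℝ)) := by rw [Finset.mul_sum]
    _ ≤ (1/s) * ((1 + 1/t) * (J:ℝ) ^ t) := by
        refine mul_le_mul_of_nonneg_left step2 (by positivity)
    _ ≤ (1/s) * ((1 + 1/t) * (1/s) ^ t) := by
        have h1t : (0:ℝ) ≤ 1 + 1/t := by positivity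
        have := mul_le_mul_of_nonneg_left hJt h1t
        exact mul_le_mul_of_nonneg_left this (by positivity)
    _ = (1 + 1/t) * ((2:ℝ)^ζ / c) ^ (1+t) * (N:ℝ) ^ (ζ * (1+t)) := hfinal

lemma dyadic_bound {ρ β B : ℝ} (hβ : 1 < β) (hB : 0 ≤ B)
    (hS : ∀ N : ℕ, 1 ≤ N →
      ∑ ℓ ∈ Finset.Icc 1 N, 1 / distNearestInt (ℓ * ρ) ≤ B * (N:ℝ) ^ β) :
    ∃ C : ℝ, 0 ≤ C ∧ ∀ m : ℕ, 1 ≤ m →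
      ∑ ℓ ∈ Finset.Icc 1 m, 1 / ((ℓ:ℝ) * distNearestInt (ℓ * ρ)) ≤ C * (m:ℝ) ^ (β - 1) := by
  set r : ℝ := (2:ℝ) ^ (β - 1) with hr_def
  have hr1 : 1 < r := Real.one_lt_rpow_iff_of_pos (by norm_num) |>.mpr (by norm_num; linarith)
  refine ⟨B * (2:ℝ)^β * r / (r - 1), div_nonneg (by positivity) (by linarith), ?_⟩
  intro m hm
  set K := Nat.log 2 m with hK
  -- terms are nonneg
  have hterm : ∀ ℓ : ℕ, 0 ≤ 1 / ((ℓ:ℝ) * distNearestInt (ℓ * ρ)) := by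
    intro ℓ
    have := dni_nonneg ((ℓ:ℝ) * ρ)
    positivity
  -- subset of dyadic blocks
  have hsub : Finset.Icc 1 m ⊆
      (Finset.range (K+1)).biUnion (fun k => Finset.Ico (2^k) (2^(k+1) : ℕ)) := by
    intro ℓ hℓ
    rw [Finset.mem_Icc] at hℓ
    rw [Finset.mem_biUnion]
    refine ⟨Nat.log 2 ℓ, ?_, ?_⟩
    · rw [Finset.mem_range]
      have := Nat.log_mono_right (b := 2) hℓ.2
      omega
    · rw [Finset.mem_Ico]
      exact ⟨Nat.pow_log_le_self 2 (by omega), Nat.lt_pow_succ_log_self (by norm_num) ℓ⟩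
  have hdisj : Set.PairwiseDisjoint ↑(Finset.range (K+1))
      (fun k => Finset.Ico (2^k) (2^(k+1) : ℕ)) := by
    intro i _ j _ hij
    rw [Function.onFun, Finset.disjoint_left]
    intro x hx hx'
    rw [Finset.mem_Ico] at hx hx'
    rcases lt_or_gt_of_ne hij with h | h
    · have : (2:ℕ)^(i+1) ≤ 2^j := Nat.pow_le_pow_right (by norm_num) (by omega)
      omega
    · have : (2:ℕ)^(j+1) ≤ 2^i := Nat.pow_le_pow_right (by norm_num) (by omega)
      omega
  -- block bound
  have hblock : ∀ k : ℕ,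
      ∑ ℓ ∈ Finset.Ico (2^k) (2^(k+1) : ℕ), 1 / ((ℓ:ℝ) * distNearestInt (ℓ * ρ))
        ≤ B * (2:ℝ)^β * r ^ k := by
    intro k
    have h2k : (0:ℝ) < (2:ℝ)^(k:ℕ) := by positivity
    have step1 : ∑ ℓ ∈ Finset.Ico (2^k) (2^(k+1) : ℕ), 1 / ((ℓ:ℝ) * distNearestInt (ℓ * ρ))
        ≤ ∑ ℓ ∈ Finset.Ico (2^k) (2^(k+1) : ℕ), (1/(2:ℝ)^(k:ℕ)) * (1 / distNearestInt (ℓ * ρ)) := by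
      refine Finset.sum_le_sum ?_
      intro ℓ hℓ
      rw [Finset.mem_Ico] at hℓ
      have hℓR : (2:ℝ)^(k:ℕ) ≤ (ℓ:ℝ) := by exact_mod_cast hℓ.1
      have hdn : 0 ≤ 1 / distNearestInt (ℓ * ρ) := one_div_nonneg.mpr (dni_nonneg _)
      have he : 1 / ((ℓ:ℝ) * distNearestInt (ℓ * ρ))
          = (1/(ℓ:ℝ)) * (1 / distNearestInt (ℓ * ρ)) := by
        rw [one_div, mul_inv, one_div, one_div]
      rw [he]
      exact mul_le_mul_of_nonneg_right (one_div_le_one_div_of_le h2k hℓR) hdn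
    have step2 : ∑ ℓ ∈ Finset.Ico (2^k) (2^(k+1) : ℕ), (1 / distNearestInt (ℓ * ρ))
        ≤ B * ((2^(k+1) : ℕ):ℝ) ^ β := by
      refine le_trans (Finset.sum_le_sum_of_subset_of_nonneg ?_ ?_) (hS (2^(k+1)) Nat.one_le_two_pow)
      · intro ℓ hℓ
        rw [Finset.mem_Ico] at hℓ
        rw [Finset.mem_Icc]
        constructor
        · exact le_trans Nat.one_le_two_pow hℓ.1
        · omega
      · intro ℓ _ _
        have := dni_nonneg ((ℓ:ℝ)*ρ)
        positivity
    calc ∑ ℓ ∈ Finset.Ico (2^k) (2^(k+1) : ℕ), 1 / ((ℓ:ℝ) * distNearestInt (ℓ * ρ))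
        ≤ ∑ ℓ ∈ Finset.Ico (2^k) (2^(k+1) : ℕ), (1/(2:ℝ)^(k:ℕ)) * (1 / distNearestInt (ℓ * ρ)) := step1
      _ = (1/(2:ℝ)^(k:ℕ)) * ∑ ℓ ∈ Finset.Ico (2^k) (2^(k+1) : ℕ), (1 / distNearestInt (ℓ * ρ)) := by
          rw [Finset.mul_sum]
      _ ≤ (1/(2:ℝ)^(k:ℕ)) * (B * ((2^(k+1) : ℕ):ℝ) ^ β) := by
          exact mul_le_mul_of_nonneg_left step2 (by positivity)
      _ = B * (2:ℝ)^β * r ^ k := by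
          have h2 : (0:ℝ) < 2 := by norm_num
          have hc : ((2^(k+1) : ℕ):ℝ) = (2:ℝ)^(k+1:ℕ) := by push_cast; ring
          have e1 : ((2:ℝ)^(k+1:ℕ)) ^ β = (2:ℝ) ^ (((k:ℝ)+1) * β) := by
            rw [← Real.rpow_natCast (2:ℝ) (k+1), ← Real.rpow_mul h2.le]
            push_cast
            ring_nf
          have e2 : r ^ (k:ℕ) = (2:ℝ) ^ ((β - 1) * (k:ℝ)) := by
            rw [hr_def, ← Real.rpow_natCast ((2:ℝ)^(β-1)) k, ← Real.rpow_mul h2.le]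
          have eL : (1/(2:ℝ)^(k:ℕ)) * (B * (2:ℝ)^(((k:ℝ)+1) * β))
              = B * (2:ℝ)^(((k:ℝ)+1) * β - (k:ℝ)) := by
            rw [Real.rpow_sub h2, ← Real.rpow_natCast (2:ℝ) k]
            ring
          rw [hc, e1, e2, eL, show ((k:ℝ)+1) * β - (k:ℝ) = β + (β-1)*(k:ℝ) by ring,
            Real.rpow_add h2]
          ring
  have hr0 : 0 < r - 1 := by linarith
  have h2 : (0:ℝ) < 2 := by norm_num
  have h1 : ∑ ℓ ∈ Finset.Icc 1 m, 1 / ((ℓ:ℝ) * distNearestInt (ℓ * ρ))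
      ≤ ∑ k ∈ Finset.range (K+1), ∑ ℓ ∈ Finset.Ico (2^k) (2^(k+1) : ℕ),
          1 / ((ℓ:ℝ) * distNearestInt (ℓ * ρ)) := by
    rw [← Finset.sum_biUnion hdisj]
    exact Finset.sum_le_sum_of_subset_of_nonneg hsub (fun i _ _ => hterm i)
  have hK2 : ((2^K : ℕ):ℝ) ≤ (m:ℝ) := by
    exact_mod_cast Nat.pow_log_le_self 2 (by omega)
  have hrK : r ^ K ≤ (m:ℝ) ^ (β - 1) := by
    have e : r ^ K = ((2:ℝ)^(K:ℕ)) ^ (β-1) := by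
      rw [← Real.rpow_natCast ((2:ℝ)^(β-1)) K, ← Real.rpow_mul h2.le,
        ← Real.rpow_natCast (2:ℝ) K, ← Real.rpow_mul h2.le, mul_comm]
    rw [e]
    refine Real.rpow_le_rpow (by positivity) ?_ (by linarith)
    calc ((2:ℝ)^(K:ℕ)) = ((2^K : ℕ):ℝ) := by push_cast; ring
      _ ≤ (m:ℝ) := hK2
  calc ∑ ℓ ∈ Finset.Icc 1 m, 1 / ((ℓ:ℝ) * distNearestInt (ℓ * ρ))
      ≤ ∑ k ∈ Finset.range (K+1), ∑ ℓ ∈ Finset.Ico (2^k) (2^(k+1) : ℕ),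
          1 / ((ℓ:ℝ) * distNearestInt (ℓ * ρ)) := h1
    _ ≤ ∑ k ∈ Finset.range (K+1), B * (2:ℝ)^β * r ^ k :=
        Finset.sum_le_sum (fun k _ => hblock k)
    _ = B * (2:ℝ)^β * ∑ k ∈ Finset.range (K+1), r ^ k := by rw [Finset.mul_sum]
    _ = B * (2:ℝ)^β * ((r^(K+1) - 1)/(r-1)) := by rw [geom_sum_eq (ne_of_gt hr1)]
    _ ≤ B * (2:ℝ)^β * ((r * (m:ℝ)^(β-1))/(r-1)) := by
        refine mul_le_mul_of_nonneg_left ?_ (by positivity)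
        have hnum : r^(K+1) - 1 ≤ r * (m:ℝ)^(β-1) := by
          have : r^(K+1) = r * r^K := by ring
          nlinarith [hrK, hr1]
        exact (div_le_div_iff_of_pos_right hr0).mpr hnum
    _ = B * (2:ℝ)^β * r / (r - 1) * (m:ℝ)^(β-1) := by ring

lemma mem_typeSet_of_lt_one {ρ : ℝ} (hirr : Irrational ρ) {ζ₀ : ℝ} (h0 : 0 ≤ ζ₀)
    (h1 : ζ₀ < 1) : ζ₀ ∈ typeSet ρ := by
  refine ⟨h0, ?_⟩
  intro ε hε
  rw [frequently_atTop]
  intro a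
  set b := max a 1 with hb
  have hbne : (Finset.Icc 1 b).Nonempty := ⟨1, by simp [Finset.mem_Icc]; omega⟩
  set m₀ : ℝ := (Finset.Icc 1 b).inf' hbne (fun p => distNearestInt (p * ρ)) with hm₀
  have hm₀pos : 0 < m₀ := by
    rw [hm₀, Finset.lt_inf'_iff]
    intro p hp
    rw [Finset.mem_Icc] at hp
    exact dni_pos hirr hp.1
  -- choose n
  have htend1 : Tendsto (fun n : ℕ => (n:ℝ) ^ (ζ₀ - 1)) atTop (nhds 0) := by
    have : Tendsto (fun x : ℝ => x ^ (-(1 - ζ₀))) atTop (nhds 0) :=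
      tendsto_rpow_neg_atTop (by linarith)
    have := this.comp tendsto_natCast_atTop_atTop (α := ℕ)
    simpa [Function.comp_def, show -(1-ζ₀) = ζ₀ - 1 by ring] using this
  have htend2 : Tendsto (fun n : ℕ => 1 / ((n:ℝ) + 1)) atTop (nhds 0) :=
    tendsto_one_div_add_atTop_nhds_zero_nat
  have hev : ∀ᶠ n : ℕ in atTop,
      ((n:ℝ) ^ (ζ₀ - 1) < ε ∧ 1 / ((n:ℝ) + 1) < m₀) ∧ 1 ≤ n := by
    filter_upwards [htend1.eventually (gt_mem_nhds hε),
      htend2.eventually (gt_mem_nhds hm₀pos), eventually_ge_atTop 1] with n h1 h2 h3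
    exact ⟨⟨h1, h2⟩, h3⟩
  obtain ⟨n, ⟨⟨hn1, hn2⟩, hn3⟩⟩ := hev.exists
  obtain ⟨j, k, hk0, hkn, hjk⟩ := Real.exists_int_int_abs_mul_sub_le ρ (by omega : 0 < n)
  set p : ℕ := k.toNat with hp_def
  have hp1 : 1 ≤ p := by omega
  have hpkZ : (p:ℤ) = k := by omega
  have hpk : (p:ℝ) = (k:ℝ) := by exact_mod_cast congrArg (Int.cast : ℤ → ℝ) hpkZ
  have hpn : p ≤ n := by omega
  have hd : distNearestInt (p * ρ) ≤ 1 / ((n:ℝ) + 1) := by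
    refine (dni_le_abs ((p:ℝ) * ρ) j).trans ?_
    rw [hpk]
    exact hjk
  refine ⟨p, ?_, ?_⟩
  · -- p ≥ a  : since p > b would follow from d too small; show b < p suffices b ≤ p? need p ≥ a
    by_contra hpa
    push_neg at hpa
    have hpb : p ∈ Finset.Icc 1 b := by
      rw [Finset.mem_Icc]
      constructor
      · exact hp1
      · omega
    have : m₀ ≤ distNearestInt (p * ρ) := Finset.inf'_le _ hpb
    linarith
  · have hpR : (0:ℝ) < (p:ℝ) := by exact_mod_cast hp1
    have hnR : (0:ℝ) < (n:ℝ) := by exact_mod_cast hn3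
    have h1 : (p:ℝ) ^ ζ₀ ≤ (n:ℝ) ^ ζ₀ :=
      Real.rpow_le_rpow hpR.le (by exact_mod_cast hpn) h0
    have hdn : 0 ≤ distNearestInt (p * ρ) := dni_nonneg _
    calc (p:ℝ) ^ ζ₀ * distNearestInt (p * ρ)
        ≤ (n:ℝ) ^ ζ₀ * (1 / ((n:ℝ) + 1)) := by
          exact mul_le_mul h1 hd hdn (Real.rpow_nonneg (by positivity) _)
      _ ≤ (n:ℝ) ^ ζ₀ * (1 / (n:ℝ)) := by
          refine mul_le_mul_of_nonneg_left ?_ (by positivity)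
          exact one_div_le_one_div_of_le hnR (by linarith)
      _ = (n:ℝ) ^ (ζ₀ - 1) := by
          rw [Real.rpow_sub hnR, Real.rpow_one]; ring
      _ < ε := hn1

lemma eta_ge_one {ρ η : ℝ} (hirr : Irrational ρ) (htype : IsOfType ρ η) : 1 ≤ η := by
  by_contra h
  push_neg at h
  set ζ₀ := (max η 0 + 1) / 2 with hζ₀
  have h0 : 0 ≤ ζ₀ := by
    have := le_max_right η 0
    rw [hζ₀]; linarith
  have h1 : ζ₀ < 1 := by
    have : max η 0 < 1 := max_lt h (by norm_num)
    rw [hζ₀]; linarith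
  have hmem := mem_typeSet_of_lt_one hirr h0 h1
  have hle : ζ₀ ≤ η := htype.1 hmem
  have : η < ζ₀ := by
    have := le_max_left η 0
    rw [hζ₀]; linarith
  linarith

lemma exists_c {ρ η : ℝ} (hirr : Irrational ρ) (htype : IsOfType ρ η) (hη1 : 1 ≤ η)
    {ζ : ℝ} (hζ : η < ζ) :
    ∃ c : ℝ, 0 < c ∧ ∀ p : ℕ, 1 ≤ p → c * (p:ℝ) ^ (-ζ) ≤ distNearestInt (p * ρ) := by
  have hnot : ζ ∉ typeSet ρ := fun hmem => absurd (htype.1 hmem) (not_le.mpr hζ)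
  rw [typeSet, Set.mem_setOf_eq] at hnot
  push_neg at hnot
  obtain ⟨ε, hε, hfreq⟩ := hnot (by linarith)
  have hev : ∀ᶠ p : ℕ in atTop, ε ≤ (p:ℝ) ^ ζ * distNearestInt (p * ρ) := by
    filter_upwards [hfreq] with p hp
    exact hp
  obtain ⟨N₀, hN₀⟩ := eventually_atTop.mp hev
  set N₁ := max N₀ 1 with hN₁
  have hne : (Finset.Icc 1 N₁).Nonempty := ⟨1, by simp [Finset.mem_Icc]; omega⟩
  set c := min ε ((Finset.Icc 1 N₁).inf' hne
    (fun p => distNearestInt (p * ρ) * (p:ℝ) ^ ζ)) with hc_def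
  have hc0 : 0 < c := by
    rw [hc_def, lt_min_iff]
    refine ⟨hε, ?_⟩
    rw [Finset.lt_inf'_iff]
    intro p hp
    rw [Finset.mem_Icc] at hp
    have h1 := dni_pos hirr hp.1
    have h2 : (0:ℝ) < (p:ℝ) ^ ζ :=
      Real.rpow_pos_of_pos (by exact_mod_cast hp.1) ζ
    positivity
  refine ⟨c, hc0, ?_⟩
  intro p hp
  have hpR : (0:ℝ) < (p:ℝ) := by exact_mod_cast hp
  have hpζ : (0:ℝ) < (p:ℝ) ^ ζ := Real.rpow_pos_of_pos hpR ζ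
  have key : c ≤ distNearestInt (p * ρ) * (p:ℝ) ^ ζ := by
    rcases le_or_gt p N₁ with hcase | hcase
    · exact le_trans (min_le_right _ _)
        (Finset.inf'_le _ (by rw [Finset.mem_Icc]; exact ⟨hp, hcase⟩))
    · have := hN₀ p (by omega)
      exact le_trans (min_le_left _ _) (by linarith [this])
  rw [Real.rpow_neg hpR.le]
  rw [mul_inv_le_iff₀ hpζ] at *
  · exact key

open Asymptotics in
/-- If `ρ₀` is an irrational number of (finite) type `η`, then for every `δ > 0`,
`∑_{ℓ=1}^m 1/(ℓ⟨ℓρ₀⟩) = O(m^{η−1+δ})` as `m → ∞`. -/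
theorem sum_inv_distNearestInt_isBigO (ρ₀ η : ℝ)
    (hirr : Irrational ρ₀) (htype : IsOfType ρ₀ η) :
    ∀ δ > (0 : ℝ),
      (fun m : ℕ => ∑ ℓ ∈ Finset.Icc 1 m, 1 / ((ℓ : ℝ) * distNearestInt (ℓ * ρ₀)))
        =O[atTop] (fun m : ℕ => (m : ℝ) ^ (η - 1 + δ)) := by
  intro δ hδ
  have hη1 : 1 ≤ η := eta_ge_one hirr htype
  set ζ : ℝ := η + δ/2 with hζ_def
  have hζη : η < ζ := by rw [hζ_def]; linarith
  have hζpos : 0 < ζ := by rw [hζ_def]; linarith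
  obtain ⟨c, hc0, hc⟩ := exists_c hirr htype hη1 hζη
  set t : ℝ := δ / (4 * ζ) with ht_def
  have ht : 0 < t := by rw [ht_def]; positivity
  set β : ℝ := ζ * (1 + t) with hβ_def
  have hβval : β = η + 3 * δ / 4 := by
    rw [hβ_def, ht_def, hζ_def]
    field_simp
    ring
  have hβ1 : 1 < β := by rw [hβval]; linarith
  set B : ℝ := (1 + 1/t) * ((2:ℝ)^ζ / c) ^ (1+t) with hB_def
  have hB : 0 ≤ B := by
    rw [hB_def]
    have : (0:ℝ) ≤ (2:ℝ)^ζ / c := by positivity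
    positivity
  have hS : ∀ N : ℕ, 1 ≤ N →
      ∑ ℓ ∈ Finset.Icc 1 N, 1 / distNearestInt (ℓ * ρ₀) ≤ B * (N:ℝ) ^ β := by
    intro N hN
    have := S_bound hc0 ht hζpos hc N hN
    calc ∑ ℓ ∈ Finset.Icc 1 N, 1 / distNearestInt (ℓ * ρ₀)
        ≤ (1 + 1/t) * ((2:ℝ)^ζ / c) ^ (1+t) * (N:ℝ) ^ (ζ * (1+t)) := this
      _ = B * (N:ℝ) ^ β := by rw [hB_def, hβ_def]
  obtain ⟨C, hC0, hC⟩ := dyadic_bound hβ1 hB hS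
  rw [Asymptotics.isBigO_iff]
  refine ⟨C, ?_⟩
  filter_upwards [eventually_ge_atTop 1] with m hm
  have hmR : (1:ℝ) ≤ (m:ℝ) := by exact_mod_cast hm
  have hsum_nonneg : 0 ≤ ∑ ℓ ∈ Finset.Icc 1 m, 1 / ((ℓ:ℝ) * distNearestInt (ℓ * ρ₀)) := by
    refine Finset.sum_nonneg ?_
    intro ℓ _
    have := dni_nonneg ((ℓ:ℝ) * ρ₀)
    positivity
  rw [Real.norm_of_nonneg hsum_nonneg,
    Real.norm_of_nonneg (Real.rpow_nonneg (by linarith) _)]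
  calc ∑ ℓ ∈ Finset.Icc 1 m, 1 / ((ℓ:ℝ) * distNearestInt (ℓ * ρ₀))
      ≤ C * (m:ℝ) ^ (β - 1) := hC m hm
    _ ≤ C * (m:ℝ) ^ (η - 1 + δ) := by
        refine mul_le_mul_of_nonneg_left ?_ hC0
        refine Real.rpow_le_rpow_of_exponent_le hmR ?_
        rw [hβval]
        linarith
end

section
/- Let ρ₀ be an irrational number of type 1. Then for every δ > 0, sup_{z∈ℝ} |∑_{ν=1}^N ψ(z − ρ₀ν)| = O(N^δ) as N → ∞. -/
open Filter

/-- `ψ(x) = ⌊x⌋ − x + 1/2`. -/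
noncomputable def psi (x : ℝ) : ℝ := ⌊x⌋ - x + 1 / 2

section Aux
open Finset

lemma abs_psi_le (x : ℝ) : |psi x| ≤ 1/2 := by
  unfold psi
  have h1 := Int.sub_one_lt_floor x
  have h2 := Int.floor_le x
  rw [abs_le]; constructor <;> linarith

lemma psi_add_int (x : ℝ) (m : ℤ) : psi (x + m) = psi x := by
  unfold psi; rw [Int.floor_add_intCast]; push_cast; ring

lemma int_sum_ediv (q : ℕ) (hq : 0 < q) (m : ℤ) :
    ∑ k ∈ range q, (m + k) / (q : ℤ) = m := by
  have hq' : (q:ℤ) ≠ 0 := by exact_mod_cast hq.ne'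
  have step : ∀ m : ℤ, ∑ k ∈ range q, (m + 1 + (k:ℤ)) / q = (∑ k ∈ range q, (m + k) / q) + 1 := by
    intro m
    calc ∑ k ∈ range q, (m + 1 + (k:ℤ))/q = ∑ k ∈ range q, (m + ((k+1:ℕ):ℤ))/q := by
          refine Finset.sum_congr rfl fun k _ => by push_cast; ring_nf
      _ = (∑ k ∈ range (q+1), (m + (k:ℤ))/q) - (m + ((0:ℕ):ℤ))/q := by
          rw [Finset.sum_range_succ']; push_cast; ring
      _ = (∑ k ∈ range q, (m + (k:ℤ))/q) + (m + 1 * q)/q - m/q := by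
          rw [Finset.sum_range_succ, one_mul]; push_cast; ring
      _ = _ := by rw [Int.add_mul_ediv_right _ _ hq']; ring
  induction m using Int.induction_on with
  | zero =>
    rw [Finset.sum_eq_zero]; intro k hk
    rw [Finset.mem_range] at hk
    rw [zero_add]
    exact Int.ediv_eq_zero_of_lt (Int.ofNat_nonneg k) (by exact_mod_cast hk)
  | succ n ih => rw [step n, ih]
  | pred n ih =>
    have h := step (-(n:ℤ) - 1)
    have h2 : ∑ k ∈ range q, (-(n:ℤ) - 1 + 1 + (k:ℤ)) / q = -(n:ℤ) := by
      rw [show ∑ k ∈ range q, (-(n:ℤ) - 1 + 1 + (k:ℤ)) / q = ∑ k ∈ range q, (-(n:ℤ) + (k:ℤ)) / q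
        from Finset.sum_congr rfl fun k _ => by ring_nf, ih]
    rw [h2] at h; linarith

lemma floor_div_nat_int (a : ℝ) (q : ℕ) (hq : 0 < q) : ⌊a / q⌋ = ⌊a⌋ / q := by
  have hq0 : (0:ℝ) < q := by exact_mod_cast hq
  have hqz : ((q:ℤ)) ≠ 0 := by exact_mod_cast hq.ne'
  rw [Int.floor_eq_iff]
  constructor
  · rw [le_div_iff₀ hq0]
    have h1 : (⌊a⌋ / (q:ℤ)) * q ≤ ⌊a⌋ := Int.ediv_mul_le ⌊a⌋ hqz
    calc ((⌊a⌋ / (q:ℤ) : ℤ) : ℝ) * q = (((⌊a⌋ / (q:ℤ)) * q : ℤ) : ℝ) := by push_cast; ring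
      _ ≤ (⌊a⌋ : ℝ) := by exact_mod_cast h1
      _ ≤ a := Int.floor_le a
  · rw [div_lt_iff₀ hq0]
    have h1 : ⌊a⌋ < (⌊a⌋ / (q:ℤ) + 1) * q := Int.lt_ediv_add_one_mul_self ⌊a⌋ (by exact_mod_cast hq)
    have h2 : a < (⌊a⌋ : ℝ) + 1 := Int.lt_floor_add_one a
    have h3 : ((⌊a⌋ : ℝ) + 1) ≤ (((⌊a⌋ / (q:ℤ) + 1) * q : ℤ) : ℝ) := by exact_mod_cast h1
    calc a < (⌊a⌋ : ℝ) + 1 := h2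
      _ ≤ (((⌊a⌋ / (q:ℤ) + 1) * q : ℤ) : ℝ) := h3
      _ = ((⌊a⌋ / (q:ℤ) : ℤ) : ℝ) * q + q := by push_cast; ring
      _ = (↑(⌊a⌋ / ↑q) + 1) * ↑q := by ring

lemma hermite_sum (x : ℝ) (q : ℕ) (hq : 0 < q) :
    ∑ k ∈ range q, ⌊x + (k:ℝ) / q⌋ = ⌊(q:ℝ) * x⌋ := by
  have hq0 : (0:ℝ) < q := by exact_mod_cast hq
  have h1 : ∀ k : ℕ, x + (k:ℝ)/q = ((q:ℝ) * x + k) / q := by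
    intro k; field_simp
  calc ∑ k ∈ range q, ⌊x + (k:ℝ)/q⌋ = ∑ k ∈ range q, (⌊(q:ℝ)*x⌋ + k) / (q:ℤ) := by
        refine Finset.sum_congr rfl fun k _ => ?_
        rw [h1 k, floor_div_nat_int _ _ hq, ← Int.floor_add_intCast]
        norm_num
    _ = ⌊(q:ℝ)*x⌋ := int_sum_ediv q hq _

lemma psi_sum_eq (w : ℝ) (q : ℕ) (hq : 0 < q) :
    ∑ k ∈ range q, psi (w + (k:ℝ)/q) = psi ((q:ℝ) * w) := by
  unfold psi
  rw [Finset.sum_add_distrib, Finset.sum_sub_distrib]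
  rw [← Int.cast_sum, hermite_sum w q hq]
  have h2 : ∑ k ∈ range q, ((k:ℝ)/q) = ((q:ℝ)-1)/2 := by
    have hg := congrArg (Nat.cast : ℕ → ℝ) (Finset.sum_range_id_mul_two q)
    push_cast [Nat.cast_sub hq] at hg
    rw [← Finset.sum_div]
    rw [show (∑ k ∈ range q, (k:ℝ)) = ((q:ℝ) * (q - 1))/2 by linarith]
    have : (q:ℝ) ≠ 0 := by positivity
    field_simp
  rw [Finset.sum_add_distrib, h2]
  simp [Finset.sum_const, Finset.card_range]
  ring

lemma jump_near_int {x e : ℝ} (h : ⌊x + e⌋ ≠ ⌊x⌋) : ∃ m : ℤ, |x - m| ≤ |e| := by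
  rcases lt_or_gt_of_ne h with hlt | hgt
  · refine ⟨⌊x⌋, ?_⟩
    have h1 : x + e < (⌊x⌋ : ℝ) := by
      have := Int.lt_floor_add_one (x + e)
      have h2 : (⌊x + e⌋ : ℝ) + 1 ≤ (⌊x⌋ : ℝ) := by exact_mod_cast hlt
      linarith
    have h2 : (⌊x⌋ : ℝ) ≤ x := Int.floor_le x
    rw [abs_sub_comm, abs_of_nonpos (by linarith)]
    calc -((⌊x⌋:ℝ) - x) = x - ⌊x⌋ := by ring
      _ ≤ -e := by linarith
      _ ≤ |e| := neg_le_abs e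
  · refine ⟨⌊x + e⌋, ?_⟩
    have h1 : x < (⌊x + e⌋ : ℝ) := by
      have := Int.lt_floor_add_one x
      have h2 : (⌊x⌋ : ℝ) + 1 ≤ (⌊x + e⌋ : ℝ) := by exact_mod_cast hgt
      linarith
    have h2 : (⌊x + e⌋ : ℝ) ≤ x + e := Int.floor_le (x + e)
    rw [abs_of_nonpos (by linarith)]
    calc -(x - (⌊x+e⌋:ℝ)) = (⌊x+e⌋:ℝ) - x := by ring
      _ ≤ e := by linarith
      _ ≤ |e| := le_abs_self e

lemma psi_diff (x e : ℝ) (he : |e| ≤ 1) :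
    |psi (x + e) - psi x| ≤ |e| + (if ⌊x + e⌋ = ⌊x⌋ then (0:ℝ) else 1) := by
  have hdiff : psi (x + e) - psi x = ((⌊x+e⌋:ℝ) - ⌊x⌋) - e := by unfold psi; ring
  by_cases hf : ⌊x + e⌋ = ⌊x⌋
  · simp only [hf, if_pos]
    rw [hdiff, hf]
    simp [abs_neg]
  · simp only [hf, if_neg, not_false_iff]
    rw [hdiff]
    have hb := abs_le.mp he
    have h1 : ⌊x + e⌋ ≤ ⌊x⌋ + 1 := by
      rw [← Int.floor_add_intCast x 1]
      exact Int.floor_le_floor (by push_cast; linarith)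
    have h2 : ⌊x⌋ - 1 ≤ ⌊x + e⌋ := by
      have := Int.floor_le_floor (R := ℝ) (show x + (-1:ℤ) ≤ x + e by push_cast; linarith)
      rwa [Int.floor_add_intCast x (-1)] at this
    have h3 : |(⌊x+e⌋:ℝ) - ⌊x⌋| ≤ 1 := by
      rw [abs_le]
      constructor <;> [exact_mod_cast (by omega : (-1:ℤ) ≤ ⌊x+e⌋ - ⌊x⌋);
        exact_mod_cast (by omega : ⌊x+e⌋ - ⌊x⌋ ≤ (1:ℤ))]
    calc |((⌊x+e⌋:ℝ) - ⌊x⌋) - e| ≤ |(⌊x+e⌋:ℝ) - ⌊x⌋| + |e| := abs_sub _ _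
      _ ≤ |e| + 1 := by linarith

lemma three_sep {t1 t2 t3 d R : ℝ} (h12 : d ≤ |t1 - t2|) (h13 : d ≤ |t1 - t3|)
    (h23 : d ≤ |t2 - t3|) (hb1 : |t1| ≤ R) (hb2 : |t2| ≤ R) (hb3 : |t3| ≤ R)
    (hd : R < d) : False := by
  have b1 := abs_le.mp hb1
  have b2 := abs_le.mp hb2
  have b3 := abs_le.mp hb3
  rcases le_abs'.mp h12 with h12' | h12' <;>
  rcases le_abs'.mp h13 with h13' | h13' <;>
  rcases le_abs'.mp h23 with h23' | h23' <;>
  linarith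

lemma int_eq_zero_of_dvd_of_lt {q A : ℤ} (hq : 0 < q) (hdvd : q ∣ A) (h1 : -q < A)
    (h2 : A < q) : A = 0 := by
  obtain ⟨c, rfl⟩ := hdvd
  rcases lt_trichotomy c 0 with hc | hc | hc
  · nlinarith
  · simp [hc]
  · nlinarith

lemma block_bound (ϑ : ℝ) (q : ℕ) (a : ℤ) (hq : 0 < q) (hcop : IsCoprime a (q:ℤ))
    (hβ : |(q:ℝ) * ϑ - a| < 1/q) (w : ℝ) :
    |∑ ν ∈ Finset.Icc 1 q, psi (w + ν * ϑ)| ≤ 4 := by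
  have hq0 : (0:ℝ) < q := by exact_mod_cast hq
  have hqz : (q:ℝ) ≠ 0 := hq0.ne'
  set β : ℝ := (q:ℝ) * ϑ - a with hβdef
  -- the residues
  set k : ℕ → ℕ := fun ν => (((ν:ℤ) * a) % q).toNat with hkdef
  have hk_cast : ∀ ν : ℕ, ((k ν : ℤ)) = ((ν:ℤ) * a) % q := fun ν =>
    Int.toNat_of_nonneg (Int.emod_nonneg _ (by exact_mod_cast hq.ne'))
  have hk_lt : ∀ ν : ℕ, k ν < q := by
    intro ν
    have h := Int.emod_lt_of_pos ((ν:ℤ) * a) (by exact_mod_cast hq : (0:ℤ) < q)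
    have h2 := hk_cast ν
    omega
  -- injectivity of residues on Icc 1 q
  have hk_inj : ∀ ν₁ ∈ Finset.Icc 1 q, ∀ ν₂ ∈ Finset.Icc 1 q, k ν₁ = k ν₂ → ν₁ = ν₂ := by
    intro ν₁ h₁ ν₂ h₂ hkk
    rw [Finset.mem_Icc] at h₁ h₂
    have hmod : ((ν₁:ℤ) * a) % q = ((ν₂:ℤ) * a) % q := by
      rw [← hk_cast, ← hk_cast, hkk]
    have hdvd : (q:ℤ) ∣ ((ν₁:ℤ) - ν₂) * a := by
      have := Int.ModEq.dvd (hmod : Int.ModEq q ((ν₁:ℤ)*a) ((ν₂:ℤ)*a))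
      have h3 : (ν₂:ℤ) * a - ν₁ * a = -(((ν₁:ℤ) - ν₂) * a) := by ring
      rw [h3] at this
      exact (dvd_neg.mp this)
    have hdvd2 : (q:ℤ) ∣ ((ν₁:ℤ) - ν₂) := hcop.symm.dvd_of_dvd_mul_right hdvd
    have hz : ((ν₁:ℤ) - ν₂) = 0 := by
      refine int_eq_zero_of_dvd_of_lt (by exact_mod_cast hq) hdvd2 ?_ ?_ <;> push_cast <;> omega
    omega
  -- argument rewriting
  have key : ∀ ν : ℕ, psi (w + ν * ϑ) = psi ((w + (k ν : ℝ)/q) + (ν:ℝ) * β / q) := by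
    intro ν
    have hid : ((k ν : ℝ)) + (q:ℝ) * (((((ν:ℤ) * a) / q : ℤ)) : ℝ) = (ν:ℝ) * a := by
      have h1 : ((k ν:ℤ) + (q:ℤ) * (((ν:ℤ)*a)/q) : ℤ) = (ν:ℤ)*a := by
        rw [hk_cast]; exact Int.emod_add_mul_ediv ((ν:ℤ) * a) q
      exact_mod_cast congrArg (Int.cast : ℤ → ℝ) h1
    have harg : w + (ν:ℝ) * ϑ = ((w + (k ν : ℝ)/q) + (ν:ℝ) * β / q) + ((((ν:ℤ) * a) / q : ℤ) : ℝ) := by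
      field_simp
      linear_combination (-(ν:ℝ)) * hβdef - hid
    rw [harg, psi_add_int]
  -- main term
  have hmain : ∑ ν ∈ Finset.Icc 1 q, psi (w + (k ν : ℝ)/q) = psi ((q:ℝ) * w) := by
    rw [← psi_sum_eq w q hq]
    refine Finset.sum_bij (fun ν _ => k ν) (fun ν _ => Finset.mem_range.mpr (hk_lt ν))
      (fun ν₁ h₁ ν₂ h₂ h => hk_inj ν₁ h₁ ν₂ h₂ h) ?_ (fun ν _ => rfl)
    intro b hb
    have hcard : (Finset.range q).card ≤ (Finset.Icc 1 q).card := by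
      rw [Finset.card_range, Nat.card_Icc]; omega
    obtain ⟨ν, hν, hb'⟩ := Finset.surj_on_of_inj_on_of_card_le (fun ν _ => k ν)
      (fun ν _ => Finset.mem_range.mpr (hk_lt ν))
      (fun ν₁ ν₂ h₁ h₂ h => hk_inj ν₁ h₁ ν₂ h₂ h) hcard b hb
    exact ⟨ν, hν, hb'.symm⟩
  -- split
  have hsplit : ∑ ν ∈ Finset.Icc 1 q, psi (w + ν * ϑ)
      = psi ((q:ℝ) * w) + ∑ ν ∈ Finset.Icc 1 q,
        (psi ((w + (k ν : ℝ)/q) + (ν:ℝ) * β / q) - psi (w + (k ν : ℝ)/q)) := by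
    rw [← hmain, ← Finset.sum_add_distrib]
    exact Finset.sum_congr rfl fun ν _ => by rw [key ν]; ring
  -- error bounds
  have hq1 : (1:ℝ) ≤ q := by exact_mod_cast hq
  have hβ1 : |β| < 1 := lt_of_lt_of_le hβ (by rw [div_le_one hq0]; exact hq1)
  have he_le : ∀ ν ∈ Finset.Icc 1 q, |(ν:ℝ) * β / q| ≤ |β| := by
    intro ν hν
    rw [Finset.mem_Icc] at hν
    rw [abs_div, abs_mul, abs_of_nonneg (Nat.cast_nonneg ν : (0:ℝ) ≤ ν), abs_of_pos hq0]
    rw [div_le_iff₀ hq0]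
    have : (ν:ℝ) ≤ q := by exact_mod_cast hν.2
    nlinarith [abs_nonneg β]
  -- jump set
  set J := (Finset.Icc 1 q).filter
    (fun ν => ¬ (⌊(w + (k ν : ℝ)/q) + (ν:ℝ) * β / q⌋ = ⌊w + (k ν : ℝ)/q⌋)) with hJdef
  have hJcard : J.card ≤ 2 := by
    by_contra hc
    push_neg at hc
    obtain ⟨ν₁, ν₂, ν₃, h₁, h₂, h₃, h12, h13, h23⟩ := Finset.two_lt_card_iff.mp hc
    have hmem : ∀ ν ∈ J, ν ∈ Finset.Icc 1 q ∧
        ¬ (⌊(w + (k ν : ℝ)/q) + (ν:ℝ) * β / q⌋ = ⌊w + (k ν : ℝ)/q⌋) := by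
      intro ν hν; exact Finset.mem_filter.mp hν
    obtain ⟨hI₁, hj₁⟩ := hmem _ h₁
    obtain ⟨hI₂, hj₂⟩ := hmem _ h₂
    obtain ⟨hI₃, hj₃⟩ := hmem _ h₃
    obtain ⟨m₁, hm₁⟩ := jump_near_int hj₁
    obtain ⟨m₂, hm₂⟩ := jump_near_int hj₂
    obtain ⟨m₃, hm₃⟩ := jump_near_int hj₃
    have hb₁ : |(w + (k ν₁ : ℝ)/q) - m₁| ≤ |β| := le_trans hm₁ (he_le _ hI₁)
    have hb₂ : |(w + (k ν₂ : ℝ)/q) - m₂| ≤ |β| := le_trans hm₂ (he_le _ hI₂)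
    have hb₃ : |(w + (k ν₃ : ℝ)/q) - m₃| ≤ |β| := le_trans hm₃ (he_le _ hI₃)
    have hsep : ∀ νa ∈ Finset.Icc 1 q, ∀ νb ∈ Finset.Icc 1 q, νa ≠ νb → ∀ ma mb : ℤ,
        1/(q:ℝ) ≤ |((w + (k νa : ℝ)/q) - ma) - ((w + (k νb : ℝ)/q) - mb)| := by
      intro νa hIa νb hIb hne ma mb
      have heq : ((w + (k νa : ℝ)/q) - ma) - ((w + (k νb : ℝ)/q) - mb)
          = (((k νa : ℤ) - k νb - q * (ma - mb) : ℤ) : ℝ)/q := by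
        field_simp
        push_cast
        ring
      have hA : ((k νa : ℤ) - k νb - q * (ma - mb) : ℤ) ≠ 0 := by
        intro h0
        have hd : ((k νa : ℤ)) - k νb = q * (ma - mb) := by omega
        have hkk : k νa = k νb := by
          have hlta := hk_lt νa
          have hltb := hk_lt νb
          have : ((k νa : ℤ)) - k νb = 0 := by
            refine int_eq_zero_of_dvd_of_lt (by exact_mod_cast hq) ⟨ma - mb, hd⟩ ?_ ?_ <;> omega
          omega
        exact hne (hk_inj νa hIa νb hIb hkk)
      have h1 : (1:ℝ) ≤ |(((k νa : ℤ) - k νb - q * (ma - mb) : ℤ) : ℝ)| := by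
        rw [← Int.cast_abs]
        exact_mod_cast Int.one_le_abs hA
      rw [heq, abs_div, abs_of_pos hq0]
      gcongr
    exact three_sep (hsep _ hI₁ _ hI₂ h12 m₁ m₂) (hsep _ hI₁ _ hI₃ h13 m₁ m₃)
      (hsep _ hI₂ _ hI₃ h23 m₂ m₃) hb₁ hb₂ hb₃ hβ
  -- conclude
  have hsum_ite : ∑ ν ∈ Finset.Icc 1 q,
      (if ⌊(w + (k ν:ℝ)/q) + (ν:ℝ)*β/q⌋ = ⌊w + (k ν:ℝ)/q⌋ then (0:ℝ) else 1) = J.card := by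
    rw [Finset.sum_ite, Finset.sum_const, Finset.sum_const]
    simp [hJdef]
  have hdiff_le : ∀ ν ∈ Finset.Icc 1 q,
      |psi ((w + (k ν:ℝ)/q) + (ν:ℝ)*β/q) - psi (w + (k ν:ℝ)/q)|
        ≤ |β| + (if ⌊(w + (k ν:ℝ)/q) + (ν:ℝ)*β/q⌋ = ⌊w + (k ν:ℝ)/q⌋ then (0:ℝ) else 1) := by
    intro ν hν
    refine le_trans (psi_diff (w + (k ν:ℝ)/q) ((ν:ℝ)*β/q) (le_trans (he_le ν hν) hβ1.le)) ?_
    exact add_le_add_left (he_le ν hν) _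
  have habs : |∑ ν ∈ Finset.Icc 1 q,
        (psi ((w + (k ν:ℝ)/q) + (ν:ℝ)*β/q) - psi (w + (k ν:ℝ)/q))|
      ≤ ∑ ν ∈ Finset.Icc 1 q,
        (|β| + (if ⌊(w + (k ν:ℝ)/q) + (ν:ℝ)*β/q⌋ = ⌊w + (k ν:ℝ)/q⌋ then (0:ℝ) else 1)) :=
    (Finset.abs_sum_le_sum_abs _ _).trans (Finset.sum_le_sum hdiff_le)
  rw [Finset.sum_add_distrib, hsum_ite, Finset.sum_const, Nat.card_Icc] at habs
  have hcard_eq : q + 1 - 1 = q := by omega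
  rw [hcard_eq, nsmul_eq_mul] at habs
  have hqβ : (q:ℝ) * |β| ≤ 1 := by
    have := (lt_div_iff₀ hq0).mp hβ
    linarith
  have hJ2 : (J.card : ℝ) ≤ 2 := by exact_mod_cast hJcard
  have hpsi := abs_psi_le ((q:ℝ) * w)
  calc |∑ ν ∈ Finset.Icc 1 q, psi (w + ν * ϑ)|
      = |psi ((q:ℝ)*w) + ∑ ν ∈ Finset.Icc 1 q,
          (psi ((w + (k ν:ℝ)/q) + (ν:ℝ)*β/q) - psi (w + (k ν:ℝ)/q))| := by rw [hsplit]
    _ ≤ |psi ((q:ℝ)*w)| + |∑ ν ∈ Finset.Icc 1 q,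
          (psi ((w + (k ν:ℝ)/q) + (ν:ℝ)*β/q) - psi (w + (k ν:ℝ)/q))| := abs_add_le _ _
    _ ≤ 1/2 + ((q:ℝ) * |β| + J.card) := by linarith
    _ ≤ 4 := by linarith

lemma distNearestInt_le_abs_sub (x : ℝ) (m : ℤ) : distNearestInt x ≤ |x - m| := by
  have h1 : (⌊x⌋ : ℝ) ≤ x := Int.floor_le x
  have h2 : x < (⌊x⌋ : ℝ) + 1 := Int.lt_floor_add_one x
  rcases le_or_gt (m : ℝ) x with h | h
  · have hm : m ≤ ⌊x⌋ := Int.le_floor.mpr h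
    have hm' : (m:ℝ) ≤ (⌊x⌋:ℝ) := by exact_mod_cast hm
    rw [abs_of_nonneg (by linarith)]
    exact le_trans (min_le_left _ _) (by linarith)
  · have hm : ⌊x⌋ + 1 ≤ m := Int.add_one_le_iff.mpr (Int.floor_lt.mpr h)
    have hm' : (⌊x⌋:ℝ) + 1 ≤ (m:ℝ) := by exact_mod_cast hm
    rw [abs_of_nonpos (by linarith)]
    exact le_trans (min_le_right _ _) (by linarith)

lemma distNearestInt_pos {x : ℝ} (hx : Irrational x) : 0 < distNearestInt x := by
  have h1 : (⌊x⌋ : ℝ) < x := by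
    rcases lt_or_eq_of_le (Int.floor_le x) with h | h
    · exact h
    · exact absurd h.symm (hx.ne_int ⌊x⌋)
  have h2 : x < (⌊x⌋ : ℝ) + 1 := Int.lt_floor_add_one x
  exact lt_min (by linarith) (by linarith)

lemma sum_Ioc_shift (f : ℕ → ℝ) (s t : ℕ) :
    ∑ ν ∈ Finset.Ioc s (s + t), f ν = ∑ i ∈ Finset.Ioc 0 t, f (s + i) := by
  have h0 : Finset.Ioc s (s + t) = Finset.Ioc (s + 0) (s + t) := by rw [add_zero]
  rw [h0, ← Finset.map_add_left_Ioc 0 t s, Finset.sum_map]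
  rfl

lemma sum_Icc_split (f : ℕ → ℝ) (q m r : ℕ) :
    ∑ ν ∈ Finset.Icc 1 (m * q + r), f ν
      = (∑ j ∈ Finset.range m, ∑ i ∈ Finset.Icc 1 q, f (j * q + i))
        + ∑ i ∈ Finset.Icc 1 r, f (m * q + i) := by
  have hIcc : ∀ n : ℕ, Finset.Icc 1 n = Finset.Ioc 0 n := fun n => rfl
  have hblocks : ∀ M : ℕ, ∑ ν ∈ Finset.Ioc 0 (M * q), f ν
      = ∑ j ∈ Finset.range M, ∑ i ∈ Finset.Ioc 0 q, f (j * q + i) := by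
    intro M
    induction M with
    | zero => simp
    | succ M ih =>
      have hsplit := Finset.sum_Ioc_consecutive f (Nat.zero_le (M * q))
        (by nlinarith : M * q ≤ (M + 1) * q)
      have hshift : ∑ ν ∈ Finset.Ioc (M * q) ((M + 1) * q), f ν
          = ∑ i ∈ Finset.Ioc 0 q, f (M * q + i) := by
        have : (M + 1) * q = M * q + q := by ring
        rw [this, sum_Ioc_shift]
      rw [Finset.sum_range_succ, ← ih, ← hshift, hsplit]
  rw [hIcc, hIcc, hIcc]
  rw [← Finset.sum_Ioc_consecutive f (Nat.zero_le (m * q)) (Nat.le_add_right (m * q) r),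
    hblocks, sum_Ioc_shift]

lemma exists_lower_bound (ρ : ℝ) (hirr : Irrational ρ) (htype : IsOfType ρ 1) {η : ℝ}
    (hη : 1 < η) :
    ∃ c : ℝ, 0 < c ∧ c ≤ 1 ∧ ∀ p : ℕ, 1 ≤ p → c ≤ (p:ℝ)^η * distNearestInt (p * ρ) := by
  have hpos : ∀ p : ℕ, 1 ≤ p → 0 < (p:ℝ)^η * distNearestInt (p * ρ) := by
    intro p hp
    have hp0 : (0:ℝ) < p := by exact_mod_cast hp
    have hirr' : Irrational ((p:ℝ) * ρ) := hirr.natCast_mul (by omega)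
    exact mul_pos (Real.rpow_pos_of_pos hp0 η) (distNearestInt_pos hirr')
  have hnot : η ∉ typeSet ρ := fun hmem => absurd (htype.1 hmem) (not_le.mpr hη)
  rw [typeSet, Set.mem_setOf_eq] at hnot
  push_neg at hnot
  obtain ⟨ε₀, hε₀, hev⟩ := hnot (by linarith : (0:ℝ) ≤ η)
  obtain ⟨P, hP⟩ := Filter.eventually_atTop.mp hev
  set g : ℕ → ℝ := fun p => (p:ℝ)^η * distNearestInt (p * ρ) with hg
  set F : Finset ℕ := Finset.Icc 1 (max P 1) with hF
  have hFne : F.Nonempty := ⟨1, Finset.mem_Icc.mpr ⟨le_refl 1, le_max_right P 1⟩⟩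
  have hFim : (F.image g).Nonempty := hFne.image g
  set c₁ : ℝ := (F.image g).min' hFim with hc₁
  have hc₁pos : 0 < c₁ := by
    obtain ⟨p₀, hp₀F, hp₀⟩ := Finset.mem_image.mp ((F.image g).min'_mem hFim)
    rw [hc₁, ← hp₀]
    exact hpos p₀ (Finset.mem_Icc.mp hp₀F).1
  refine ⟨min (min ε₀ c₁) 1, lt_min (lt_min hε₀ hc₁pos) one_pos, min_le_right _ _, ?_⟩
  intro p hp
  rcases le_or_gt p (max P 1) with hle | hlt
  · have hpF : p ∈ F := Finset.mem_Icc.mpr ⟨hp, hle⟩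
    have : c₁ ≤ g p := Finset.min'_le _ _ (Finset.mem_image_of_mem g hpF)
    exact le_trans (le_trans (min_le_left _ _) (min_le_right _ _)) this
  · have hpP : P ≤ p := le_trans (le_max_left P 1) hlt.le
    have := hP p hpP
    exact le_trans (le_trans (min_le_left _ _) (min_le_left _ _)) this

lemma dirichlet_step (ρ : ℝ) (N : ℕ) (hN : 0 < N) :
    ∃ (Q : ℕ) (a : ℤ), 0 < Q ∧ Q ≤ N ∧ IsCoprime a (Q:ℤ) ∧
      |(Q:ℝ) * ρ - a| ≤ 1/(N+1) := by
  obtain ⟨x, h1, h2⟩ := Real.exists_rat_abs_sub_le_and_den_le ρ hN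
  have hd0 : (0:ℝ) < x.den := by exact_mod_cast x.pos
  refine ⟨x.den, x.num, x.pos, h2, ?_, ?_⟩
  · rw [Int.isCoprime_iff_gcd_eq_one]
    exact x.reduced
  · have heq : |(x.den:ℝ) * ρ - x.num| = (x.den:ℝ) * |ρ - x| := by
      rw [← abs_of_pos hd0, ← abs_mul]
      congr 1
      rw [Rat.cast_def]
      field_simp
      rw [abs_of_pos hd0]; ring
    rw [heq]
    calc (x.den:ℝ) * |ρ - x| ≤ (x.den:ℝ) * (1 / ((N + 1) * x.den)) := by
          exact mul_le_mul_of_nonneg_left h1 hd0.le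
      _ = 1 / (N + 1) := by field_simp

open Asymptotics in
/-- Bound (2.22): if `ρ₀` is an irrational number of type `1`, then for every `δ > 0`,
`sup_z |∑_{ν=1}^N ψ(z − ρ₀ν)| = O(N^δ)` as `N → ∞`. -/
theorem psi_sum_isBigO_of_type_one (ρ₀ : ℝ)
    (hirr : Irrational ρ₀) (htype : IsOfType ρ₀ 1) :
    ∀ δ > (0 : ℝ),
      (fun N : ℕ => ⨆ z : ℝ, |∑ ν ∈ Finset.Icc 1 N, psi (z - ρ₀ * ν)|)
        =O[atTop] (fun N : ℕ => (N : ℝ) ^ δ) := by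
  intro δ hδ
  obtain ⟨c, hc0, hc1, hcb⟩ := exists_lower_bound ρ₀ hirr htype (by linarith : (1:ℝ) < 1 + δ)
  have h2δ : (2:ℝ)^(-δ) < 1 := Real.rpow_lt_one_of_one_lt_of_neg one_lt_two (by linarith)
  have h2δ0 : (0:ℝ) < (2:ℝ)^(-δ) := Real.rpow_pos_of_pos two_pos _
  set A : ℝ := 4 / (c * (1 - (2:ℝ)^(-δ))) with hA
  have hA0 : 0 < A := div_pos (by norm_num) (mul_pos hc0 (by linarith))
  have main : ∀ N : ℕ, ∀ z : ℝ, |∑ ν ∈ Finset.Icc 1 N, psi (z - ρ₀ * ν)| ≤ A * (N:ℝ)^δ := by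
    intro N
    induction N using Nat.strong_induction_on with
    | _ N ih =>
    intro z
    rcases Nat.eq_zero_or_pos N with rfl | hN
    · simp [Real.zero_rpow hδ.ne']
    obtain ⟨Q, a, hQ0, hQN, hcop, happ⟩ := dirichlet_step ρ₀ N hN
    have hQ0R : (0:ℝ) < Q := by exact_mod_cast hQ0
    have hN0R : (0:ℝ) < N := by exact_mod_cast hN
    have hQNR : (Q:ℝ) ≤ N := by exact_mod_cast hQN
    have hlt : |(Q:ℝ) * ρ₀ - a| < 1 / Q :=
      lt_of_le_of_lt happ (by apply one_div_lt_one_div_of_lt hQ0R; linarith)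
    have hQlow : c * N ≤ (Q:ℝ)^(1+δ:ℝ) := by
      have h1 : c ≤ (Q:ℝ)^(1+δ:ℝ) * distNearestInt ((Q:ℝ) * ρ₀) := hcb Q hQ0
      have h2 : distNearestInt ((Q:ℝ)*ρ₀) ≤ 1/((N:ℝ)+1) :=
        le_trans (distNearestInt_le_abs_sub _ a) happ
      have hQη0 : (0:ℝ) ≤ (Q:ℝ)^(1+δ:ℝ) := (Real.rpow_pos_of_pos hQ0R _).le
      have h3 : c ≤ (Q:ℝ)^(1+δ:ℝ) * (1/((N:ℝ)+1)) :=
        le_trans h1 (mul_le_mul_of_nonneg_left h2 hQη0)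
      have hN1 : (0:ℝ) < (N:ℝ)+1 := by linarith
      rw [mul_one_div, le_div_iff₀ hN1] at h3
      nlinarith
    set m := N / Q with hm
    set r := N % Q with hr
    have hdecomp : m * Q + r = N := by rw [hm, hr, Nat.mul_comm]; exact Nat.div_add_mod N Q
    have hm1 : 1 ≤ m := (Nat.one_le_div_iff hQ0).mpr hQN
    have hrQ : r < Q := Nat.mod_lt N hQ0
    have hQmQ : Q ≤ m * Q := Nat.le_mul_of_pos_left Q (by omega)
    have hrN : r < N := by omega
    have hr2 : 2 * (r:ℝ) ≤ N := by
      have : 2 * r ≤ N := by omega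
      exact_mod_cast this
    have hNδ0 : (0:ℝ) ≤ (N:ℝ)^δ := Real.rpow_nonneg hN0R.le δ
    have hmN : (m:ℝ) * Q ≤ N := by exact_mod_cast Nat.div_mul_le_self N Q
    have hQδ : (Q:ℝ)^(δ:ℝ) ≤ (N:ℝ)^δ := Real.rpow_le_rpow hQ0R.le hQNR hδ.le
    have hQη : (Q:ℝ)^(1+δ:ℝ) = Q * (Q:ℝ)^δ := by
      rw [Real.rpow_add hQ0R, Real.rpow_one]
    have hcm : c * m ≤ (N:ℝ)^δ := by
      have h1 : c * ((m:ℝ) * Q) ≤ c * N := mul_le_mul_of_nonneg_left hmN hc0.le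
      have h2 : c * (N:ℝ) ≤ (Q:ℝ) * (Q:ℝ)^δ := by rw [← hQη]; exact hQlow
      have h3 : (Q:ℝ) * (Q:ℝ)^δ ≤ Q * (N:ℝ)^δ := mul_le_mul_of_nonneg_left hQδ hQ0R.le
      have h4 := le_trans (le_trans h1 h2) h3
      nlinarith
    have hsum_eq : ∑ ν ∈ Finset.Icc 1 N, psi (z - ρ₀ * ν)
        = (∑ j ∈ Finset.range m, ∑ i ∈ Finset.Icc 1 Q, psi (z - ρ₀ * ((j*Q + i : ℕ):ℝ)))
          + ∑ i ∈ Finset.Icc 1 r, psi (z - ρ₀ * ((m*Q + i : ℕ):ℝ)) := by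
      conv_lhs => rw [← hdecomp]
      exact sum_Icc_split (fun ν => psi (z - ρ₀ * ν)) Q m r
    have hblock : ∀ j : ℕ, |∑ i ∈ Finset.Icc 1 Q, psi (z - ρ₀ * ((j*Q + i : ℕ):ℝ))| ≤ 4 := by
      intro j
      have hβ' : |(Q:ℝ) * (-ρ₀) - ((-a : ℤ):ℝ)| < 1/Q := by
        rw [show (Q:ℝ)*(-ρ₀) - ((-a:ℤ):ℝ) = -((Q:ℝ)*ρ₀ - a) by push_cast; ring, abs_neg]
        exact hlt
      have hb := block_bound (-ρ₀) Q (-a) hQ0 hcop.neg_left hβ' (z - ρ₀ * ((j:ℝ)*Q))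
      have hterm : ∀ i ∈ Finset.Icc 1 Q, psi (z - ρ₀ * ((j*Q + i : ℕ):ℝ))
          = psi ((z - ρ₀ * ((j:ℝ)*Q)) + (i:ℝ) * (-ρ₀)) := by
        intro i _; congr 1; push_cast; ring
      rw [Finset.sum_congr rfl hterm]
      exact hb
    have hblocks_sum : |∑ j ∈ Finset.range m, ∑ i ∈ Finset.Icc 1 Q,
        psi (z - ρ₀ * ((j*Q + i:ℕ):ℝ))| ≤ 4 * m := by
      calc |∑ j ∈ Finset.range m, ∑ i ∈ Finset.Icc 1 Q, psi (z - ρ₀ * ((j*Q + i:ℕ):ℝ))|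
          ≤ ∑ j ∈ Finset.range m, |∑ i ∈ Finset.Icc 1 Q, psi (z - ρ₀ * ((j*Q + i:ℕ):ℝ))| :=
            Finset.abs_sum_le_sum_abs _ _
        _ ≤ ∑ _j ∈ Finset.range m, (4:ℝ) := Finset.sum_le_sum fun j _ => hblock j
        _ = 4 * m := by rw [Finset.sum_const, Finset.card_range, nsmul_eq_mul]; ring
    have htail : |∑ i ∈ Finset.Icc 1 r, psi (z - ρ₀ * ((m*Q + i:ℕ):ℝ))| ≤ A * (r:ℝ)^δ := by
      have hterm : ∀ i ∈ Finset.Icc 1 r, psi (z - ρ₀ * ((m*Q + i : ℕ):ℝ))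
          = psi ((z - ρ₀ * ((m:ℝ)*Q)) - ρ₀ * i) := by
        intro i _; congr 1; push_cast; ring
      rw [Finset.sum_congr rfl hterm]
      exact ih r hrN (z - ρ₀ * ((m:ℝ)*Q))
    have hrδ : (r:ℝ)^δ ≤ (N:ℝ)^δ * (2:ℝ)^(-δ) := by
      have h1 : (r:ℝ) ≤ (N:ℝ)/2 := by linarith
      have h2 : (r:ℝ)^δ ≤ ((N:ℝ)/2)^δ := Real.rpow_le_rpow (Nat.cast_nonneg r) h1 hδ.le
      have h3 : ((N:ℝ)/2)^δ = (N:ℝ)^δ * (2:ℝ)^(-δ) := by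
        rw [Real.div_rpow hN0R.le (by norm_num : (0:ℝ) ≤ 2),
          Real.rpow_neg (by norm_num : (0:ℝ) ≤ 2)]
        ring
      linarith [h2, h3.le, h3.ge]
    have hfinal : 4 * (m:ℝ) + A * ((N:ℝ)^δ * (2:ℝ)^(-δ)) ≤ A * (N:ℝ)^δ := by
      have h4m : 4 * (m:ℝ) ≤ 4 / c * (N:ℝ)^δ := by
        rw [div_mul_eq_mul_div, le_div_iff₀ hc0]; nlinarith
      have h1x : (1:ℝ) - (2:ℝ)^(-δ) ≠ 0 := by linarith
      have hAeq : 4 / c = A * (1 - (2:ℝ)^(-δ)) := by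
        rw [hA]; field_simp
      have h5 : 4 * (m:ℝ) ≤ A * (1 - (2:ℝ)^(-δ)) * (N:ℝ)^δ := by
        rw [← hAeq]; exact h4m
      have h6 : A * (1 - (2:ℝ)^(-δ)) * (N:ℝ)^δ + A * ((N:ℝ)^δ * (2:ℝ)^(-δ)) = A * (N:ℝ)^δ := by
        ring
      linarith
    calc |∑ ν ∈ Finset.Icc 1 N, psi (z - ρ₀ * ν)|
        = |(∑ j ∈ Finset.range m, ∑ i ∈ Finset.Icc 1 Q, psi (z - ρ₀ * ((j*Q + i:ℕ):ℝ)))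
            + ∑ i ∈ Finset.Icc 1 r, psi (z - ρ₀ * ((m*Q + i:ℕ):ℝ))| := by rw [hsum_eq]
      _ ≤ |∑ j ∈ Finset.range m, ∑ i ∈ Finset.Icc 1 Q, psi (z - ρ₀ * ((j*Q + i:ℕ):ℝ))|
            + |∑ i ∈ Finset.Icc 1 r, psi (z - ρ₀ * ((m*Q + i:ℕ):ℝ))| := abs_add_le _ _
      _ ≤ 4 * (m:ℝ) + A * (r:ℝ)^δ := add_le_add hblocks_sum htail
      _ ≤ 4 * (m:ℝ) + A * ((N:ℝ)^δ * (2:ℝ)^(-δ)) :=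
          add_le_add_right (mul_le_mul_of_nonneg_left hrδ hA0.le) _
      _ ≤ A * (N:ℝ)^δ := hfinal
  rw [Asymptotics.isBigO_iff]
  refine ⟨A, Filter.Eventually.of_forall fun N => ?_⟩
  have hballs := main N
  have hbdd : BddAbove (Set.range fun z : ℝ => |∑ ν ∈ Finset.Icc 1 N, psi (z - ρ₀ * ν)|) :=
    ⟨A * (N:ℝ)^δ, by rintro y ⟨z, rfl⟩; exact hballs z⟩
  have hle : (⨆ z : ℝ, |∑ ν ∈ Finset.Icc 1 N, psi (z - ρ₀ * ν)|) ≤ A * (N:ℝ)^δ :=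
    ciSup_le hballs
  have hge : 0 ≤ ⨆ z : ℝ, |∑ ν ∈ Finset.Icc 1 N, psi (z - ρ₀ * ν)| :=
    le_trans (abs_nonneg _) (le_ciSup hbdd 0)
  rw [Real.norm_eq_abs, Real.norm_eq_abs, abs_of_nonneg hge,
    abs_of_nonneg (Real.rpow_nonneg (Nat.cast_nonneg N) δ)]
  exact le_trans hle (le_of_eq (by ring))

end Aux
end
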